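/- Let U = (U^0, ..., U^N) be real-valued (R^m-valued) square-integrable random variables satisfying the backward Euler recursion U^j = U^{j-1} + h f(U^j) + g(U^{j-1})ΔW^j with f, g satisfying the coercivity condition (f(x),x) + ((4q-3)/2)|g(x)|_HS² ≤ L(1+|x|²) for some q ≥ 1, and assume h ∈ (0, 1/(2L)) and that ΔW^j is independent of F_{t_{j-1}} with E[ΔW^j] = 0 and E[|ΔW^j|²] = h per coordinate. Then for all n ∈ {1,...,N}: E[|U^n|²] + h·E[|g(U^n)|_HS²] ≤ C_h·exp(2L·nh/(1-2Lh))·(1 + E[|U^0|²] + h·E[|g(U^0)|_HS²]), where C_h = max{1, 2LT}/(1-2Lh) and T ≥ Nh. -/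

import Mathlib

open MeasureTheory ProbabilityTheory Matrix

section Helpers
variable {Ω : Type*} [MeasurableSpace Ω] {μ : Measure Ω}

lemma bem_mul_integrable {f g : Ω → ℝ}
    (hf : AEStronglyMeasurable f μ) (hg : AEStronglyMeasurable g μ)
    (hf2 : Integrable (fun ω => f ω ^ 2) μ) (hg2 : Integrable (fun ω => g ω ^ 2) μ) :
    Integrable (fun ω => f ω * g ω) μ := by
  refine Integrable.mono' ((hf2.add hg2).const_mul (1/2)) (hf.mul hg) (ae_of_all _ fun ω => ?_)
  simp only [Pi.add_apply, Real.norm_eq_abs]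
  have h1 : |f ω * g ω| = |f ω| * |g ω| := abs_mul _ _
  nlinarith [sq_nonneg (|f ω| - |g ω|), sq_abs (f ω), sq_abs (g ω), abs_nonneg (f ω * g ω)]

lemma bem_indepFun_of_indep {M₁ M₂ : MeasurableSpace Ω} (hInd : Indep M₁ M₂ μ)
    {φ ψ : Ω → ℝ} (hφ : Measurable[M₁] φ) (hψ : Measurable[M₂] ψ) :
    IndepFun φ ψ μ := by
  rw [IndepFun_iff]
  intro t1 t2 h1 h2
  have hle1 : MeasurableSpace.comap φ inferInstance ≤ M₁ := measurable_iff_comap_le.1 hφ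
  have hle2 : MeasurableSpace.comap ψ inferInstance ≤ M₂ := measurable_iff_comap_le.1 hψ
  exact (Indep_iff _ _ _).1 hInd t1 t2 (hle1 _ h1) (hle2 _ h2)

lemma bem_int_of_sq {f : Ω → ℝ} [IsFiniteMeasure μ] (hf : AEStronglyMeasurable f μ)
    (hf2 : Integrable (fun ω => f ω ^ 2) μ) : Integrable f μ := by
  refine Integrable.mono' ((integrable_const 1).add hf2) hf (ae_of_all _ fun ω => ?_)
  simp only [Pi.add_apply, Real.norm_eq_abs]
  nlinarith [sq_nonneg (|f ω| - 1), sq_abs (f ω), abs_nonneg (f ω)]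

end Helpers

/-- algebraic expansion of a squared sum. -/
lemma bem_sq_expand {d' : ℕ} (a : ℝ) (c w : Fin d' → ℝ) :
    (a + ∑ k, c k * w k) ^ 2
      = a ^ 2 + (∑ k, 2 * ((a * c k) * w k))
        + ∑ k, ∑ l, (c k * c l) * (w k * w l) := by
  have h1 : 2 * a * (∑ k, c k * w k) = ∑ k, 2 * ((a * c k) * w k) := by
    rw [Finset.mul_sum]; exact Finset.sum_congr rfl fun k _ => by ring
  have h2 : (∑ k, c k * w k) ^ 2 = ∑ k, ∑ l, (c k * c l) * (w k * w l) := by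
    rw [sq, Finset.sum_mul_sum]
    exact Finset.sum_congr rfl fun k _ => Finset.sum_congr rfl fun l _ => by ring
  rw [add_sq, h1, h2]

/-- pointwise energy inequality from coercivity. -/
lemma bem_pointwise {m' : ℕ} (L q h : ℝ) (hq : 1 ≤ q) (hh0 : 0 ≤ h)
    (a v fa : Fin m' → ℝ) (gsq : ℝ) (hgsq : 0 ≤ gsq)
    (hv : ∀ i, v i = a i - h * fa i)
    (hco : (∑ i, fa i * a i) + ((4 * q - 3) / 2) * gsq ≤ L * (1 + ∑ i, (a i) ^ 2)) :
    (1/2) * (∑ i, (a i) ^ 2) + (h * ((4 * q - 3) / 2)) * gsq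
      ≤ (1/2) * (∑ i, (v i) ^ 2) + (h * L) * (1 + ∑ i, (a i) ^ 2) := by
  have h1 : ∑ i, v i * a i ≤ (1/2) * (∑ i, (v i) ^ 2) + (1/2) * (∑ i, (a i) ^ 2) := by
    have hb : ∀ i ∈ Finset.univ, v i * a i ≤ ((v i) ^ 2 + (a i) ^ 2) / 2 :=
      fun i _ => by nlinarith [sq_nonneg (v i - a i)]
    calc ∑ i, v i * a i ≤ ∑ i, ((v i) ^ 2 + (a i) ^ 2) / 2 := Finset.sum_le_sum hb
      _ = (1/2) * (∑ i, (v i) ^ 2) + (1/2) * (∑ i, (a i) ^ 2) := by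
          simp only [Finset.mul_sum]
          rw [← Finset.sum_add_distrib]
          exact Finset.sum_congr rfl fun i _ => by ring
  have h2 : ∑ i, v i * a i = ∑ i, (a i) ^ 2 - h * ∑ i, fa i * a i := by
    calc ∑ i, v i * a i = ∑ i, ((a i) ^ 2 - h * (fa i * a i)) :=
          Finset.sum_congr rfl fun i _ => by rw [hv i]; ring
      _ = ∑ i, (a i) ^ 2 - h * ∑ i, fa i * a i := by
          rw [Finset.sum_sub_distrib, Finset.mul_sum]
  have h3 := mul_le_mul_of_nonneg_left hco hh0
  nlinarith [h1, h2, h3]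



set_option maxHeartbeats 1000000 in
/-- A priori estimate for the backward Euler–Maruyama scheme under the
coercivity condition `(f(x),x) + ((4q-3)/2)|g(x)|²_HS ≤ L(1+|x|²)`. -/
theorem backward_euler_maruyama_apriori
    (m d : ℕ) (hm : 0 < m) (hd : 0 < d)
    {Ω : Type*} [MeasurableSpace Ω] (μ : Measure Ω) [IsProbabilityMeasure μ]
    (F : ℕ → MeasurableSpace Ω) (hF : ∀ j, F j ≤ ‹MeasurableSpace Ω›)
    (hFmono : Monotone F)
    (L q T h : ℝ) (hL : 0 < L) (hq : 1 ≤ q)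
    (hh0 : 0 < h) (hh1 : h < 1 / (2 * L))
    (N : ℕ) (hT : (N : ℝ) * h ≤ T)
    (f : (Fin m → ℝ) → (Fin m → ℝ))
    (g : (Fin m → ℝ) → Matrix (Fin m) (Fin d) ℝ)
    (hfg : Continuous f ∧ ∀ i j, Continuous fun x => g x i j)
    (hcoer : ∀ x : Fin m → ℝ,
      (∑ i, f x i * x i) + ((4 * q - 3) / 2) * (∑ i, ∑ k, (g x i k) ^ 2)
        ≤ L * (1 + ∑ i, (x i) ^ 2))
    (ΔW : ℕ → Ω → (Fin d → ℝ))
    (hΔWmeas : ∀ j, Measurable (ΔW j))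
    (hΔWindep : ∀ j, 1 ≤ j → j ≤ N →
      Indep (MeasurableSpace.comap (ΔW j) inferInstance) (F (j - 1)) μ)
    (hΔWmean : ∀ j, 1 ≤ j → j ≤ N → ∀ i, ∫ ω, ΔW j ω i ∂μ = 0)
    (hΔWvar : ∀ j, 1 ≤ j → j ≤ N → ∀ i, ∫ ω, (ΔW j ω i) ^ 2 ∂μ = h)
    (hΔWuncorr : ∀ j, 1 ≤ j → j ≤ N → ∀ i k, i ≠ k → ∫ ω, ΔW j ω i * ΔW j ω k ∂μ = 0)
    (U : ℕ → Ω → (Fin m → ℝ))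
    (hUadapted : ∀ j, j ≤ N → ∀ i, Measurable[F j] fun ω => U j ω i)
    (hUL2 : ∀ j, j ≤ N → Integrable (fun ω => ∑ i, (U j ω i) ^ 2) μ)
    (hfUL2 : ∀ j, j ≤ N → Integrable (fun ω => ∑ i, (f (U j ω) i) ^ 2) μ)
    (hgUL2 : ∀ j, j ≤ N → Integrable (fun ω => ∑ i, ∑ k, (g (U j ω) i k) ^ 2) μ)
    (hrec : ∀ j, 1 ≤ j → j ≤ N → ∀ ω,
      U j ω = U (j - 1) ω + h • f (U j ω) + (g (U (j - 1) ω)) *ᵥ ΔW j ω) :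
    ∀ n, 1 ≤ n → n ≤ N →
      (∫ ω, ∑ i, (U n ω i) ^ 2 ∂μ) + h * ∫ ω, ∑ i, ∑ k, (g (U n ω) i k) ^ 2 ∂μ
        ≤ (max 1 (2 * L * T) / (1 - 2 * L * h))
            * Real.exp (2 * L * (n * h) / (1 - 2 * L * h))
            * (1 + (∫ ω, ∑ i, (U 0 ω i) ^ 2 ∂μ)
                + h * ∫ ω, ∑ i, ∑ k, (g (U 0 ω) i k) ^ 2 ∂μ) := by
  have hLh : 2 * L * h < 1 := by
    have h2L : (0:ℝ) < 2 * L := by linarith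
    have := (lt_div_iff₀ h2L).1 hh1
    linarith
  have hε : 0 < 1 - 2 * L * h := by linarith
  set A : ℕ → ℝ := fun j => ∫ ω, ∑ i, (U j ω i) ^ 2 ∂μ with hAdef
  set Gq : ℕ → ℝ := fun j => ∫ ω, ∑ i, ∑ k, (g (U j ω) i k) ^ 2 ∂μ with hGdef
  have hAnn : ∀ j, 0 ≤ A j := fun j =>
    integral_nonneg fun ω => Finset.sum_nonneg fun i _ => sq_nonneg _
  have hGnn : ∀ j, 0 ≤ Gq j := fun j =>
    integral_nonneg fun ω => Finset.sum_nonneg fun i _ => Finset.sum_nonneg fun k _ => sq_nonneg _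
  -- the key one-step estimate
  have hstep : ∀ j, 1 ≤ j → j ≤ N →
      (1 - 2 * L * h) * (A j + h * Gq j) ≤ (A (j - 1) + h * Gq (j - 1)) + 2 * L * h := by
    intro j hj1 hjN
    have hj1N : j - 1 ≤ N := le_trans (Nat.sub_le j 1) hjN
    -- measurability
    have hXiF : ∀ i, Measurable[F (j-1)] fun ω => U (j-1) ω i := hUadapted _ hj1N
    have hXvecF : Measurable[F (j-1)] fun ω => U (j-1) ω := by
      letI := F (j-1)
      exact measurable_pi_lambda _ hXiF
    have hGikF : ∀ i k, Measurable[F (j-1)] fun ω => g (U (j-1) ω) i k :=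
      fun i k => ((hfg.2 i k).measurable).comp hXvecF
    have hXi : ∀ i, Measurable fun ω => U (j-1) ω i :=
      fun i => (hXiF i).mono (hF _) le_rfl
    have hGik : ∀ i k, Measurable fun ω => g (U (j-1) ω) i k :=
      fun i k => (hGikF i k).mono (hF _) le_rfl
    have hWcomap : Measurable[MeasurableSpace.comap (ΔW j) inferInstance] (ΔW j) :=
      measurable_iff_comap_le.2 le_rfl
    have hWkC : ∀ k, Measurable[MeasurableSpace.comap (ΔW j) inferInstance]
        fun ω => ΔW j ω k := fun k => (measurable_pi_apply k).comp hWcomap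
    have hWk : ∀ k, Measurable fun ω => ΔW j ω k :=
      fun k => (measurable_pi_apply k).comp (hΔWmeas j)
    -- integrability of squares
    have hXi2 : ∀ i, Integrable (fun ω => (U (j-1) ω i) ^ 2) μ := by
      intro i
      refine Integrable.mono' (hUL2 _ hj1N)
        (((hXi i).pow_const 2).aestronglyMeasurable) (ae_of_all _ fun ω => ?_)
      rw [Real.norm_eq_abs, abs_of_nonneg (sq_nonneg _)]
      exact Finset.single_le_sum (f := fun i' => (U (j-1) ω i') ^ 2)
        (fun i' _ => sq_nonneg _) (Finset.mem_univ i)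
    have hGik2 : ∀ i k, Integrable (fun ω => (g (U (j-1) ω) i k) ^ 2) μ := by
      intro i k
      refine Integrable.mono' (hgUL2 _ hj1N)
        (((hGik i k).pow_const 2).aestronglyMeasurable) (ae_of_all _ fun ω => ?_)
      rw [Real.norm_eq_abs, abs_of_nonneg (sq_nonneg _)]
      calc (g (U (j-1) ω) i k) ^ 2
          ≤ ∑ k', (g (U (j-1) ω) i k') ^ 2 :=
            Finset.single_le_sum (f := fun k' => (g (U (j-1) ω) i k') ^ 2)
              (fun _ _ => sq_nonneg _) (Finset.mem_univ k)
        _ ≤ ∑ i', ∑ k', (g (U (j-1) ω) i' k') ^ 2 :=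
            Finset.single_le_sum (f := fun i' => ∑ k', (g (U (j-1) ω) i' k') ^ 2)
              (fun _ _ => Finset.sum_nonneg fun _ _ => sq_nonneg _) (Finset.mem_univ i)
    have hWk2 : ∀ k, Integrable (fun ω => (ΔW j ω k) ^ 2) μ := by
      intro k
      by_contra hni
      have h0 : ∫ ω, (ΔW j ω k) ^ 2 ∂μ = 0 := integral_undef hni
      rw [hΔWvar j hj1 hjN k] at h0
      linarith
    have hWk1 : ∀ k, Integrable (fun ω => ΔW j ω k) μ :=
      fun k => bem_int_of_sq (hWk k).aestronglyMeasurable (hWk2 k)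
    have hInd := hΔWindep j hj1 hjN
    -- integrable products
    have hXG_int : ∀ i k, Integrable (fun ω => U (j-1) ω i * g (U (j-1) ω) i k) μ :=
      fun i k => bem_mul_integrable (hXi i).aestronglyMeasurable
        (hGik i k).aestronglyMeasurable (hXi2 i) (hGik2 i k)
    have hGG_int : ∀ i k l,
        Integrable (fun ω => g (U (j-1) ω) i k * g (U (j-1) ω) i l) μ :=
      fun i k l => bem_mul_integrable (hGik i k).aestronglyMeasurable
        (hGik i l).aestronglyMeasurable (hGik2 i k) (hGik2 i l)
    have hWW_int : ∀ k l, Integrable (fun ω => ΔW j ω k * ΔW j ω l) μ :=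
      fun k l => bem_mul_integrable (hWk k).aestronglyMeasurable
        (hWk l).aestronglyMeasurable (hWk2 k) (hWk2 l)
    -- independence of functionals
    have hindXG : ∀ i k, IndepFun
        (fun ω => U (j-1) ω i * g (U (j-1) ω) i k) (fun ω => ΔW j ω k) μ :=
      fun i k => (bem_indepFun_of_indep hInd (hWkC k) ((hXiF i).mul (hGikF i k))).symm
    have hindGG : ∀ i k l, IndepFun
        (fun ω => g (U (j-1) ω) i k * g (U (j-1) ω) i l)
        (fun ω => ΔW j ω k * ΔW j ω l) μ :=
      fun i k l => (bem_indepFun_of_indep hInd ((hWkC k).mul (hWkC l))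
        ((hGikF i k).mul (hGikF i l))).symm
    -- integrability of the triple products
    have hXGW_int : ∀ i k,
        Integrable (fun ω => (U (j-1) ω i * g (U (j-1) ω) i k) * ΔW j ω k) μ :=
      fun i k => ((hindXG i k).integrable_mul (hXG_int i k) (hWk1 k)).congr
        (ae_of_all _ fun ω => rfl)
    have hGGWW_int : ∀ i k l, Integrable
        (fun ω => (g (U (j-1) ω) i k * g (U (j-1) ω) i l) * (ΔW j ω k * ΔW j ω l)) μ :=
      fun i k l => ((hindGG i k l).integrable_mul (hGG_int i k l) (hWW_int k l)).congr
        (ae_of_all _ fun ω => rfl)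
    -- expectations of cross terms
    have hcross : ∀ i k,
        ∫ ω, (U (j-1) ω i * g (U (j-1) ω) i k) * ΔW j ω k ∂μ = 0 := by
      intro i k
      have := (hindXG i k).integral_mul_eq_mul_integral (hXG_int i k).aestronglyMeasurable
        (hWk1 k).aestronglyMeasurable
      calc ∫ ω, (U (j-1) ω i * g (U (j-1) ω) i k) * ΔW j ω k ∂μ
          = (∫ ω, U (j-1) ω i * g (U (j-1) ω) i k ∂μ) * ∫ ω, ΔW j ω k ∂μ := this
        _ = 0 := by rw [hΔWmean j hj1 hjN k, mul_zero]
    have hquad : ∀ i k l,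
        ∫ ω, (g (U (j-1) ω) i k * g (U (j-1) ω) i l) * (ΔW j ω k * ΔW j ω l) ∂μ
          = (∫ ω, g (U (j-1) ω) i k * g (U (j-1) ω) i l ∂μ)
            * ∫ ω, ΔW j ω k * ΔW j ω l ∂μ :=
      fun i k l => (hindGG i k l).integral_mul_eq_mul_integral (hGG_int i k l).aestronglyMeasurable
        (hWW_int k l).aestronglyMeasurable
    -- the expansion of the integrand
    have hpt : (fun ω => ∑ i, (U (j-1) ω i + ∑ k, g (U (j-1) ω) i k * ΔW j ω k) ^ 2)
        = (fun ω => (∑ i, (U (j-1) ω i) ^ 2)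
          + ((∑ i, ∑ k, 2 * ((U (j-1) ω i * g (U (j-1) ω) i k) * ΔW j ω k))
          + (∑ i, ∑ k, ∑ l, (g (U (j-1) ω) i k * g (U (j-1) ω) i l)
              * (ΔW j ω k * ΔW j ω l)))) := by
      funext ω
      simp only [bem_sq_expand]
      rw [Finset.sum_add_distrib, Finset.sum_add_distrib]
      ring
    have hQint : Integrable
        (fun ω => ∑ i, ∑ k, 2 * ((U (j-1) ω i * g (U (j-1) ω) i k) * ΔW j ω k)) μ :=
      integrable_finset_sum _ fun i _ => integrable_finset_sum _ fun k _ =>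
        (hXGW_int i k).const_mul 2
    have hRint : Integrable
        (fun ω => ∑ i, ∑ k, ∑ l, (g (U (j-1) ω) i k * g (U (j-1) ω) i l)
          * (ΔW j ω k * ΔW j ω l)) μ :=
      integrable_finset_sum _ fun i _ => integrable_finset_sum _ fun k _ =>
        integrable_finset_sum _ fun l _ => hGGWW_int i k l
    have hQzero :
        ∫ ω, ∑ i, ∑ k, 2 * ((U (j-1) ω i * g (U (j-1) ω) i k) * ΔW j ω k) ∂μ = 0 := by
      rw [integral_finset_sum _ fun i _ => integrable_finset_sum _ fun k _ =>
        (hXGW_int i k).const_mul 2]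
      refine Finset.sum_eq_zero fun i _ => ?_
      rw [integral_finset_sum _ fun k _ => (hXGW_int i k).const_mul 2]
      refine Finset.sum_eq_zero fun k _ => ?_
      rw [integral_const_mul, hcross i k, mul_zero]
    have hRval :
        ∫ ω, ∑ i, ∑ k, ∑ l, (g (U (j-1) ω) i k * g (U (j-1) ω) i l)
          * (ΔW j ω k * ΔW j ω l) ∂μ = h * Gq (j-1) := by
      rw [integral_finset_sum _ fun i _ => integrable_finset_sum _ fun k _ =>
        integrable_finset_sum _ fun l _ => hGGWW_int i k l]
      have hterm : ∀ i : Fin m, (∫ ω, ∑ k, ∑ l, (g (U (j-1) ω) i k * g (U (j-1) ω) i l)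
          * (ΔW j ω k * ΔW j ω l) ∂μ) = ∑ k, h * ∫ ω, (g (U (j-1) ω) i k) ^ 2 ∂μ := by
        intro i
        rw [integral_finset_sum _ fun k _ => integrable_finset_sum _ fun l _ =>
          hGGWW_int i k l]
        refine Finset.sum_congr rfl fun k _ => ?_
        rw [integral_finset_sum _ fun l _ => hGGWW_int i k l]
        rw [Finset.sum_eq_single k]
        · rw [hquad i k k]
          have h1 : ∫ ω, ΔW j ω k * ΔW j ω k ∂μ = h := by
            have : (fun ω => ΔW j ω k * ΔW j ω k) = fun ω => (ΔW j ω k) ^ 2 :=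
              funext fun ω => (sq _).symm
            rw [this, hΔWvar j hj1 hjN k]
          have h2 : (fun ω => g (U (j-1) ω) i k * g (U (j-1) ω) i k)
              = fun ω => (g (U (j-1) ω) i k) ^ 2 := funext fun ω => (sq _).symm
          rw [h1, h2, mul_comm]
        · intro l _ hlk
          rw [hquad i k l, hΔWuncorr j hj1 hjN k l (Ne.symm hlk), mul_zero]
        · intro hk; exact absurd (Finset.mem_univ k) hk
      rw [Finset.sum_congr rfl fun i _ => hterm i]
      simp only [← Finset.mul_sum]
      congr 1
      have e : ∫ ω, ∑ i, ∑ k, (g (U (j-1) ω) i k) ^ 2 ∂μ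
          = ∑ i, ∑ k, ∫ ω, (g (U (j-1) ω) i k) ^ 2 ∂μ := by
        rw [integral_finset_sum _ fun i _ => integrable_finset_sum _ fun k _ => hGik2 i k]
        exact Finset.sum_congr rfl fun i _ => integral_finset_sum _ fun k _ => hGik2 i k
      rw [← e]
    have hQRint : Integrable (fun ω =>
        (∑ i, ∑ k, 2 * ((U (j-1) ω i * g (U (j-1) ω) i k) * ΔW j ω k))
        + (∑ i, ∑ k, ∑ l, (g (U (j-1) ω) i k * g (U (j-1) ω) i l)
            * (ΔW j ω k * ΔW j ω l))) μ := hQint.add hRint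
    have hVexp : ∫ ω, ∑ i, (U (j-1) ω i + ∑ k, g (U (j-1) ω) i k * ΔW j ω k) ^ 2 ∂μ
        = A (j-1) + h * Gq (j-1) := by
      rw [hpt]
      rw [integral_add (hUL2 _ hj1N) hQRint, integral_add hQint hRint,
        hQzero, hRval, zero_add]
    have hptineq : ∀ ω,
        (1/2) * (∑ i, (U j ω i) ^ 2)
          + (h * ((4*q-3)/2)) * (∑ i, ∑ k, (g (U j ω) i k) ^ 2)
        ≤ (1/2) * (∑ i, (U (j-1) ω i + ∑ k, g (U (j-1) ω) i k * ΔW j ω k) ^ 2)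
          + (h * L) * (1 + ∑ i, (U j ω i) ^ 2) := by
      intro ω
      have hrecω := hrec j hj1 hjN ω
      have hv : ∀ i, (U (j-1) ω i + ∑ k, g (U (j-1) ω) i k * ΔW j ω k)
          = U j ω i - h * f (U j ω) i := by
        intro i
        have hcf := congrFun hrecω i
        simp only [Pi.add_apply, Pi.smul_apply, smul_eq_mul, Matrix.mulVec,
          dotProduct] at hcf
        linarith
      exact bem_pointwise L q h hq hh0.le (fun i => U j ω i)
        (fun i => U (j-1) ω i + ∑ k, g (U (j-1) ω) i k * ΔW j ω k)
        (fun i => f (U j ω) i) _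
        (Finset.sum_nonneg fun _ _ => Finset.sum_nonneg fun _ _ => sq_nonneg _)
        hv (hcoer (U j ω))
    have hSint : Integrable
        (fun ω => ∑ i, (U (j-1) ω i + ∑ k, g (U (j-1) ω) i k * ΔW j ω k) ^ 2) μ := by
      rw [hpt]; exact (hUL2 _ hj1N).add (hQint.add hRint)
    have hLHSint : Integrable (fun ω => (1/2) * (∑ i, (U j ω i) ^ 2)
        + (h * ((4*q-3)/2)) * (∑ i, ∑ k, (g (U j ω) i k) ^ 2)) μ :=
      ((hUL2 _ hjN).const_mul _).add ((hgUL2 _ hjN).const_mul _)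
    have h1U : Integrable (fun ω => 1 + ∑ i, (U j ω i) ^ 2) μ :=
      (integrable_const 1).add (hUL2 _ hjN)
    have hLa : Integrable (fun ω => (1/2) * (∑ i, (U j ω i) ^ 2)) μ :=
      (hUL2 _ hjN).const_mul _
    have hLb : Integrable (fun ω =>
        (h * ((4*q-3)/2)) * (∑ i, ∑ k, (g (U j ω) i k) ^ 2)) μ :=
      (hgUL2 _ hjN).const_mul _
    have hRa : Integrable (fun ω =>
        (1/2) * (∑ i, (U (j-1) ω i + ∑ k, g (U (j-1) ω) i k * ΔW j ω k) ^ 2)) μ :=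
      hSint.const_mul _
    have hRb : Integrable (fun ω => (h * L) * (1 + ∑ i, (U j ω i) ^ 2)) μ :=
      h1U.const_mul _
    have hRHSint : Integrable (fun ω =>
        (1/2) * (∑ i, (U (j-1) ω i + ∑ k, g (U (j-1) ω) i k * ΔW j ω k) ^ 2)
        + (h * L) * (1 + ∑ i, (U j ω i) ^ 2)) μ := hRa.add hRb
    have hint := integral_mono hLHSint hRHSint hptineq
    rw [integral_add hLa hLb, integral_add hRa hRb,
        integral_const_mul, integral_const_mul, integral_const_mul, integral_const_mul,
        integral_add (integrable_const 1) (hUL2 _ hjN), hVexp] at hint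
    simp only [integral_const, measure_univ, probReal_univ, ENNReal.toReal_one, smul_eq_mul,
      mul_one] at hint
    have hGqj := hGnn j
    have hAj := hAnn j
    simp only [hAdef, hGdef] at hint hGqj hAj ⊢
    have e1 : 1 * (h * (∫ ω, ∑ i, ∑ k, (g (U j ω) i k) ^ 2 ∂μ))
        ≤ (4*q-3) * (h * (∫ ω, ∑ i, ∑ k, (g (U j ω) i k) ^ 2 ∂μ)) :=
      mul_le_mul_of_nonneg_right (by linarith) (mul_nonneg hh0.le hGqj)
    have e2 : (0:ℝ) ≤ 2 * L * h * (h * (∫ ω, ∑ i, ∑ k, (g (U j ω) i k) ^ 2 ∂μ)) :=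
      mul_nonneg (by positivity) (mul_nonneg hh0.le hGqj)
    nlinarith [hint, e1, e2]
  -- iterate
  set ρ : ℝ := 1 / (1 - 2 * L * h) with hρdef
  have hρ1 : 1 ≤ ρ := by
    rw [hρdef, le_div_iff₀ hε]; nlinarith
  have hρ0 : 0 ≤ ρ := by linarith
  have hS : 0 ≤ A 0 + h * Gq 0 := by nlinarith [hAnn 0, hGnn 0]
  have hiter : ∀ p, p ≤ N →
      A p + h * Gq p ≤ ρ ^ p * (A 0 + h * Gq 0 + 2 * L * h * p) := by
    intro p
    induction p with
    | zero => intro _; simp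
    | succ k ih =>
      intro hk
      have hkN : k ≤ N := Nat.le_of_succ_le hk
      have h1 := hstep (k + 1) (Nat.succ_le_succ (Nat.zero_le k)) hk
      simp only [Nat.add_sub_cancel] at h1
      have h2 := ih hkN
      have hρk : 1 ≤ ρ ^ k := one_le_pow₀ hρ1
      have hρk0 : 0 ≤ ρ ^ k := by linarith
      have key : A (k + 1) + h * Gq (k + 1) ≤ ρ * ((A k + h * Gq k) + 2 * L * h) := by
        rw [hρdef, one_div, inv_mul_eq_div, le_div_iff₀ hε]
        linarith
      have h3 : (A k + h * Gq k) + 2 * L * h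
          ≤ ρ ^ k * (A 0 + h * Gq 0 + 2 * L * h * (k + 1)) := by
        have h4 : 2 * L * h ≤ 2 * L * h * ρ ^ k := by
          nlinarith [mul_le_mul_of_nonneg_left hρk (show (0:ℝ) ≤ 2 * L * h by positivity)]
        nlinarith
      calc A (k + 1) + h * Gq (k + 1)
          ≤ ρ * ((A k + h * Gq k) + 2 * L * h) := key
        _ ≤ ρ * (ρ ^ k * (A 0 + h * Gq 0 + 2 * L * h * (k + 1))) :=
            mul_le_mul_of_nonneg_left h3 hρ0
        _ = ρ ^ (k + 1) * (A 0 + h * Gq 0 + 2 * L * h * ((k : ℝ) + 1)) := by ring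
        _ = ρ ^ (k + 1) * (A 0 + h * Gq 0 + 2 * L * h * ((k + 1 : ℕ) : ℝ)) := by push_cast; ring
  intro n hn1 hnN
  have hmain := hiter n hnN
  have hexp : ρ ^ n ≤ Real.exp (2 * L * (n * h) / (1 - 2 * L * h)) := by
    have hρe : ρ ≤ Real.exp (2 * L * h / (1 - 2 * L * h)) := by
      have h1 : ρ = 1 + 2 * L * h / (1 - 2 * L * h) := by
        rw [hρdef]; field_simp; ring
      rw [h1]
      have := Real.add_one_le_exp (2 * L * h / (1 - 2 * L * h))
      linarith
    calc ρ ^ n ≤ (Real.exp (2 * L * h / (1 - 2 * L * h))) ^ n :=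
          pow_le_pow_left₀ hρ0 hρe n
      _ = Real.exp (n * (2 * L * h / (1 - 2 * L * h))) := (Real.exp_nat_mul _ n).symm
      _ = Real.exp (2 * L * (n * h) / (1 - 2 * L * h)) := by congr 1; ring
  have hnhT : (n : ℝ) * h ≤ T := by
    have : (n : ℝ) ≤ N := Nat.cast_le.2 hnN
    nlinarith
  have hM1 : (1:ℝ) ≤ max 1 (2 * L * T) := le_max_left _ _
  have hM2 : 2 * L * T ≤ max 1 (2 * L * T) := le_max_right _ _
  set E : ℝ := Real.exp (2 * L * (n * h) / (1 - 2 * L * h)) with hEdef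
  have hE1 : 1 ≤ E := by
    rw [hEdef, Real.one_le_exp_iff]
    positivity
  have hE0 : 0 < E := by linarith
  have hb1 : A 0 + h * Gq 0 + 2 * L * h * n ≤ A 0 + h * Gq 0 + 2 * L * T := by
    nlinarith
  have hb2 : A 0 + h * Gq 0 + 2 * L * T ≤ max 1 (2 * L * T) * (1 + (A 0 + h * Gq 0)) := by
    nlinarith
  have hfinal : A n + h * Gq n
      ≤ max 1 (2 * L * T) / (1 - 2 * L * h) * E * (1 + A 0 + h * Gq 0) := by
    have c1 : A n + h * Gq n ≤ ρ ^ n * (A 0 + h * Gq 0 + 2 * L * T) := by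
      calc A n + h * Gq n ≤ ρ ^ n * (A 0 + h * Gq 0 + 2 * L * h * n) := hmain
        _ ≤ ρ ^ n * (A 0 + h * Gq 0 + 2 * L * T) :=
            mul_le_mul_of_nonneg_left hb1 (pow_nonneg hρ0 n)
    have c2 : ρ ^ n * (A 0 + h * Gq 0 + 2 * L * T)
        ≤ E * (max 1 (2 * L * T) * (1 + (A 0 + h * Gq 0))) := by
      have hT0 : (0:ℝ) ≤ T := le_trans (by positivity) hT
      have hx : 0 ≤ A 0 + h * Gq 0 + 2 * L * T := by
        have : (0:ℝ) ≤ 2 * L * T := by positivity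
        linarith
      calc ρ ^ n * (A 0 + h * Gq 0 + 2 * L * T)
          ≤ E * (A 0 + h * Gq 0 + 2 * L * T) := mul_le_mul_of_nonneg_right hexp hx
        _ ≤ E * (max 1 (2 * L * T) * (1 + (A 0 + h * Gq 0))) :=
            mul_le_mul_of_nonneg_left hb2 (le_of_lt hE0)
    have c3 : E * (max 1 (2 * L * T) * (1 + (A 0 + h * Gq 0)))
        ≤ max 1 (2 * L * T) / (1 - 2 * L * h) * E * (1 + A 0 + h * Gq 0) := by
      have hM0 : (0:ℝ) ≤ max 1 (2 * L * T) := le_trans zero_le_one hM1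
      have hP0 : (0:ℝ) ≤ E * (max 1 (2 * L * T) * (1 + (A 0 + h * Gq 0))) :=
        mul_nonneg hE0.le (mul_nonneg hM0 (by linarith [hS]))
      calc E * (max 1 (2 * L * T) * (1 + (A 0 + h * Gq 0)))
          ≤ E * (max 1 (2 * L * T) * (1 + (A 0 + h * Gq 0))) * ρ :=
            le_mul_of_one_le_right hP0 hρ1
        _ = max 1 (2 * L * T) / (1 - 2 * L * h) * E * (1 + A 0 + h * Gq 0) := by
            rw [hρdef]; ring
    exact le_trans c1 (le_trans c2 c3)
  exact hfinal
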